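/- Let R be a domain, n ≥ 0, and B = R[x₁^{±1},…,xₙ^{±1}] the Laurent polynomial ring in n variables over R. For arbitrary subsets P, Q ⊆ {1,…,n} (possibly overlapping), the R-subalgebra A of B generated by {xᵢ : i ∈ P} ∪ {xᵢ⁻¹ : i ∈ Q} is pre-factorially closed in B. (This covers all subalgebras R[x₁^{δ₁},…,xₙ^{δₙ}] with δᵢ ∈ {−1, 0, 1, ±1}.) -/

import Mathlib

/-- An `R`-subalgebra `A` of `B` is pre-factorially closed (pfc) in `B`. -/
def IsPfc {R B : Type*} [CommSemiring R] [CommRing B] [Algebra R B] (A : Subalgebra R B) : Prop :=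
  ∀ a b : B, a ≠ 0 → b ≠ 0 → a * b ∈ A →
    ∃ u : Bˣ, (u : B) * a ∈ A ∧ ((u⁻¹ : Bˣ) : B) * b ∈ A

instance pfcAux.wfFin (m : ℕ) : WellFoundedLT (Fin m) := inferInstance

namespace PfcAux

open AddMonoidAlgebra

variable {R : Type*} [CommRing R] {n : ℕ}

/-- exponent vectors allowed in the subalgebra -/
def Good (P Q : Set (Fin n)) (v : Fin n → ℤ) : Prop :=
  ∀ i, (0 < v i → i ∈ P) ∧ (v i < 0 → i ∈ Q)

lemma Good.add {P Q : Set (Fin n)} {v w : Fin n → ℤ} (hv : Good P Q v) (hw : Good P Q w) :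
    Good P Q (v + w) := by
  intro i
  refine ⟨fun h => ?_, fun h => ?_⟩
  · rw [Pi.add_apply] at h
    rcases lt_or_ge 0 (v i) with h' | h'
    · exact (hv i).1 h'
    · exact (hw i).1 (by omega)
  · rw [Pi.add_apply] at h
    rcases lt_or_ge (v i) 0 with h' | h'
    · exact (hv i).2 h'
    · exact (hw i).2 (by omega)

lemma Good.zero {P Q : Set (Fin n)} : Good P Q 0 := fun i => by simp

/-- The subalgebra of Laurent polynomials whose support consists of good exponents. -/
def goodAlg (R : Type*) [CommRing R] (P Q : Set (Fin n)) :
    Subalgebra R (AddMonoidAlgebra R (Fin n → ℤ)) where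
  carrier := {f | ∀ v ∈ f.coeff.support, Good P Q v}
  mul_mem' := by
    classical
    intro f g hf hg v hv
    obtain ⟨x, hx, y, hy, rfl⟩ := Finset.mem_add.mp (AddMonoidAlgebra.support_coeff_mul_subset f g hv)
    exact (hf x hx).add (hg y hy)
  add_mem' := by
    intro f g hf hg v hv
    rcases Finset.mem_union.mp (Finsupp.support_add hv) with h | h
    exacts [hf v h, hg v h]
  algebraMap_mem' := by
    intro r v hv
    have heq : (algebraMap R (AddMonoidAlgebra R (Fin n → ℤ))) r = AddMonoidAlgebra.single 0 r := rfl
    rw [heq, AddMonoidAlgebra.coeff_single] at hv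
    have h0 : v = 0 := by simpa using Finsupp.support_single_subset hv
    subst h0; exact Good.zero

lemma mem_goodAlg_iff {P Q : Set (Fin n)} {f : AddMonoidAlgebra R (Fin n → ℤ)} :
    f ∈ goodAlg R P Q ↔ ∀ v ∈ f.coeff.support, Good P Q v := Iff.rfl

variable {G : Type*} [AddCommGroup G]

lemma of'_add (a b : G) : of' R G (a + b) = of' R G a * of' R G b := by
  rw [of'_apply, of'_apply, of'_apply, AddMonoidAlgebra.single_mul_single, one_mul]

lemma of'_zero : of' R G 0 = 1 := rfl

lemma of'_sum {ι : Type*} (s : Finset ι) (g : ι → G) :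
    of' R G (∑ i ∈ s, g i) = ∏ i ∈ s, of' R G (g i) := by
  classical
  induction s using Finset.cons_induction with
  | empty => simpa using (of'_zero (R := R) (G := G))
  | cons i s his ih => rw [Finset.sum_cons, Finset.prod_cons, of'_add, ih]

lemma of'_nsmul (k : ℕ) (g : G) : of' R G (k • g) = (of' R G g) ^ k := by
  induction k with
  | zero => simpa using (of'_zero (R := R) (G := G))
  | succ k ih => rw [succ_nsmul, of'_add, ih, pow_succ]

lemma support_of'_mul {c y : G} {f : AddMonoidAlgebra R G}
    (hy : y ∈ (of' R G c * f).coeff.support) : ∃ w ∈ f.coeff.support, y = c + w := by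
  rw [Finsupp.mem_support_iff, of'_apply, AddMonoidAlgebra.coeff_single_mul_apply, one_mul] at hy
  exact ⟨-c + y, Finsupp.mem_support_iff.mpr hy, (add_neg_cancel_left c y).symm⟩

/-- generators of the adjoin -/
def gens (R : Type*) [CommRing R] (n : ℕ) (P Q : Set (Fin n)) :
    Set (AddMonoidAlgebra R (Fin n → ℤ)) :=
  ((fun i => AddMonoidAlgebra.of' R (Fin n → ℤ) (Pi.single i (1 : ℤ))) '' P ∪
   (fun i => AddMonoidAlgebra.of' R (Fin n → ℤ) (-Pi.single i (1 : ℤ))) '' Q)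

lemma of'_mem_adjoin {P Q : Set (Fin n)} {v : Fin n → ℤ} (hv : Good P Q v) :
    of' R (Fin n → ℤ) v ∈ Algebra.adjoin R (gens R n P Q) := by
  have hv' : v = ∑ i, Pi.single i (v i) := (Finset.univ_sum_single v).symm
  rw [hv', of'_sum]
  refine Subalgebra.prod_mem _ fun i _ => ?_
  rcases lt_trichotomy (v i) 0 with h | h | h
  · have hiQ : i ∈ Q := (hv i).2 h
    have hrw : Pi.single i (v i) = ((-(v i)).toNat • (-Pi.single i (1 : ℤ)) : Fin n → ℤ) := by
      funext j
      simp only [Pi.smul_apply, Pi.neg_apply, Pi.single_apply, smul_neg, nsmul_eq_mul]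
      split_ifs <;> omega
    rw [hrw, of'_nsmul]
    refine pow_mem (Algebra.subset_adjoin ?_) _
    exact Or.inr ⟨i, hiQ, rfl⟩
  · rw [h, Pi.single_zero, of'_zero]
    exact one_mem _
  · have hiP : i ∈ P := (hv i).1 h
    have hrw : Pi.single i (v i) = ((v i).toNat • (Pi.single i (1 : ℤ)) : Fin n → ℤ) := by
      funext j
      simp only [Pi.smul_apply, Pi.single_apply, nsmul_eq_mul]
      split_ifs <;> omega
    rw [hrw, of'_nsmul]
    refine pow_mem (Algebra.subset_adjoin ?_) _
    exact Or.inl ⟨i, hiP, rfl⟩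

lemma adjoin_eq (P Q : Set (Fin n)) :
    Algebra.adjoin R (gens R n P Q) = goodAlg R P Q := by
  refine le_antisymm (Algebra.adjoin_le ?_) ?_
  · rintro x (⟨i, hi, rfl⟩ | ⟨i, hi, rfl⟩)
    · intro v hv
      have hv' := Finsupp.support_single_subset hv
      rw [Finset.mem_singleton] at hv'
      subst hv'
      intro j
      constructor
      · intro h
        rcases eq_or_ne j i with rfl | hne
        · exact hi
        · rw [Pi.single_apply, if_neg hne] at h
          exact absurd h (by omega)
      · intro h
        exfalso
        simp only [Pi.single_apply] at h
        split_ifs at h <;> omega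
    · intro v hv
      have hv' := Finsupp.support_single_subset hv
      rw [Finset.mem_singleton] at hv'
      subst hv'
      intro j
      constructor
      · intro h
        exfalso
        simp only [Pi.neg_apply, Pi.single_apply] at h
        split_ifs at h <;> omega
      · intro h
        rcases eq_or_ne j i with rfl | hne
        · exact hi
        · rw [Pi.neg_apply, Pi.single_apply, if_neg hne] at h
          exact absurd h (by omega)
  · intro f hf
    have hrepr : f = ∑ v ∈ f.coeff.support, AddMonoidAlgebra.single v (f.coeff v) := by
      conv_lhs => rw [← AddMonoidAlgebra.sum_coeff_single f]
      rfl
    rw [hrepr]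
    refine Subalgebra.sum_mem _ fun v hv => ?_
    have : AddMonoidAlgebra.single v (f.coeff v) = f.coeff v • of' R (Fin n → ℤ) v := by
      rw [of'_apply, AddMonoidAlgebra.smul_single, smul_eq_mul, mul_one]
    rw [this]
    exact Subalgebra.smul_mem _ (of'_mem_adjoin (hf v hv)) _

section KeyLemma

variable {L : Type*} [AddCommMonoid L] [LinearOrder L] [IsOrderedCancelAddMonoid L]

lemma mul_apply_argmax {D : G → L} (hD : Function.Injective D)
    (hadd : ∀ a b : G, D (a + b) = D a + D b)
    {p q : AddMonoidAlgebra R G} {va vb : G}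
    (hpa : ∀ w ∈ p.coeff.support, D w ≤ D va) (hqb : ∀ w ∈ q.coeff.support, D w ≤ D vb) :
    (p * q).coeff (va + vb) = p.coeff va * q.coeff vb := by
  classical
  simp_rw [AddMonoidAlgebra.coeff_mul, Finsupp.sum]
  rw [Finset.sum_eq_single va, Finset.sum_eq_single vb, if_pos rfl]
  · refine fun y hy hne => if_neg fun he => ?_
    apply_fun D at he; simp_rw [hadd] at he
    exact (add_lt_add_right (((hqb y hy)).lt_of_ne <| hD.ne_iff.2 hne) _).ne he
  · intro h; rw [if_pos rfl, Finsupp.notMem_support_iff.1 h, mul_zero]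
  · refine fun x hx hne => Finset.sum_eq_zero fun y hy => if_neg fun he => ?_
    apply_fun D at he; simp_rw [hadd] at he
    exact (add_lt_add_of_lt_of_le (((hpa x hx)).lt_of_ne <| hD.ne_iff.2 hne) (hqb y hy)).ne he
  · refine fun h => Finset.sum_eq_zero fun y _ => ite_eq_right_iff.mpr fun _ => ?_
    rw [Finsupp.notMem_support_iff.mp h, zero_mul]

end KeyLemma

end PfcAux

/-- For arbitrary subsets `P, Q ⊆ {1,…,n}`, the `R`-subalgebra of the Laurent polynomial
ring `B = R[x₁^{±1},…,xₙ^{±1}]` generated by `{xᵢ : i ∈ P} ∪ {xᵢ⁻¹ : i ∈ Q}` is pfc in `B`. -/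
theorem adjoin_vars_isPfc (R : Type*) [CommRing R] [IsDomain R] (n : ℕ)
    (P Q : Set (Fin n)) :
    IsPfc (Algebra.adjoin R
      ((fun i => AddMonoidAlgebra.of' R (Fin n → ℤ) (Pi.single i (1 : ℤ))) '' P ∪
       (fun i => AddMonoidAlgebra.of' R (Fin n → ℤ) (-Pi.single i (1 : ℤ))) '' Q)) := by
  classical
  open PfcAux AddMonoidAlgebra in
  intro a b ha hb hab
  have hAdj := PfcAux.adjoin_eq (R := R) P Q
  rw [show ((fun i => AddMonoidAlgebra.of' R (Fin n → ℤ) (Pi.single i (1 : ℤ))) '' P ∪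
       (fun i => AddMonoidAlgebra.of' R (Fin n → ℤ) (-Pi.single i (1 : ℤ))) '' Q) =
       PfcAux.gens R n P Q from rfl, hAdj] at hab ⊢
  have hgood : ∀ v ∈ (a * b).coeff.support, PfcAux.Good P Q v := PfcAux.mem_goodAlg_iff.mp hab
  -- main argmax extraction
  have main : ∀ c : (Fin n → ℤ) →+ ℤ, ∃ ca cb : ℤ,
      (∀ w ∈ a.coeff.support, c w ≤ ca) ∧ (∀ w ∈ b.coeff.support, c w ≤ cb) ∧
      (∃ v ∈ (a * b).coeff.support, ca + cb = c v) := by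
    intro c
    set D : (Fin n → ℤ) → ℤ ×ₗ Lex (Fin n → ℤ) := fun v => toLex (c v, toLex v) with hDdef
    have hD : Function.Injective D := fun v w h => by
      simpa [hDdef] using congrArg (fun x => ofLex (ofLex x).2) h
    have hadd : ∀ v w : Fin n → ℤ, D (v + w) = D v + D w := by
      intro v w
      simp only [hDdef, map_add]
      rfl
    obtain ⟨va, hva, hmaxa⟩ :=
      Finset.exists_max_image a.coeff.support D (Finsupp.support_nonempty_iff.mpr (mt AddMonoidAlgebra.coeff_eq_zero.mp ha))
    obtain ⟨vb, hvb, hmaxb⟩ :=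
      Finset.exists_max_image b.coeff.support D (Finsupp.support_nonempty_iff.mpr (mt AddMonoidAlgebra.coeff_eq_zero.mp hb))
    have hfst : ∀ {x y : Fin n → ℤ}, D x ≤ D y → c x ≤ c y := by
      intro x y h
      rcases Prod.Lex.le_iff.mp h with h' | h'
      · exact h'.le
      · exact h'.1.le
    refine ⟨c va, c vb, fun w hw => hfst (hmaxa w hw), fun w hw => hfst (hmaxb w hw),
      va + vb, ?_, (map_add c va vb).symm⟩
    rw [Finsupp.mem_support_iff, PfcAux.mul_apply_argmax hD hadd hmaxa hmaxb]
    exact mul_ne_zero (Finsupp.mem_support_iff.mp hva) (Finsupp.mem_support_iff.mp hvb)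
  have hmax := fun i => main (Pi.evalAddMonoidHom (fun _ : Fin n => ℤ) i)
  have hmin := fun i => main (-(Pi.evalAddMonoidHom (fun _ : Fin n => ℤ) i))
  choose maxA maxB hmaxA hmaxB hmaxmem using hmax
  choose nA nB hnA hnB hnmem using hmin
  -- simplify the coordinate statements
  have hmaxA' : ∀ i, ∀ w ∈ a.coeff.support, w i ≤ maxA i := fun i w hw => hmaxA i w hw
  have hmaxB' : ∀ i, ∀ w ∈ b.coeff.support, w i ≤ maxB i := fun i w hw => hmaxB i w hw
  have hnA' : ∀ i, ∀ w ∈ a.coeff.support, -(w i) ≤ nA i := fun i w hw => by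
    simpa using hnA i w hw
  have hnB' : ∀ i, ∀ w ∈ b.coeff.support, -(w i) ≤ nB i := fun i w hw => by
    simpa using hnB i w hw
  have HmaxP : ∀ i, 0 < maxA i + maxB i → i ∈ P := fun i h => by
    obtain ⟨v, hv, he⟩ := hmaxmem i
    have he' : maxA i + maxB i = v i := by simpa using he
    exact (hgood v hv i).1 (by omega)
  have HmaxQ : ∀ i, maxA i + maxB i < 0 → i ∈ Q := fun i h => by
    obtain ⟨v, hv, he⟩ := hmaxmem i
    have he' : maxA i + maxB i = v i := by simpa using he
    exact (hgood v hv i).2 (by omega)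
  have HminP : ∀ i, 0 < -(nA i + nB i) → i ∈ P := fun i h => by
    obtain ⟨v, hv, he⟩ := hnmem i
    have he' : nA i + nB i = -(v i) := by simpa using he
    exact (hgood v hv i).1 (by omega)
  have HminQ : ∀ i, -(nA i + nB i) < 0 → i ∈ Q := fun i h => by
    obtain ⟨v, hv, he⟩ := hnmem i
    have he' : nA i + nB i = -(v i) := by simpa using he
    exact (hgood v hv i).2 (by omega)
  obtain ⟨w₀, hw₀⟩ := Finsupp.support_nonempty_iff.mpr (mt AddMonoidAlgebra.coeff_eq_zero.mp ha)
  obtain ⟨v₀, hv₀⟩ := Finsupp.support_nonempty_iff.mpr (mt AddMonoidAlgebra.coeff_eq_zero.mp hb)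
  set m : Fin n → ℤ := fun i => if i ∈ Q then -maxA i else nA i with hm
  refine ⟨⟨of' R (Fin n → ℤ) m, of' R (Fin n → ℤ) (-m),
    by rw [← PfcAux.of'_add, add_neg_cancel, PfcAux.of'_zero],
    by rw [← PfcAux.of'_add, neg_add_cancel, PfcAux.of'_zero]⟩, ?_, ?_⟩
  · -- `x^m * a` is good
    rw [PfcAux.mem_goodAlg_iff]
    intro v hv
    obtain ⟨w, hw, rfl⟩ := PfcAux.support_of'_mul hv
    intro i
    have h1 : w i ≤ maxA i := hmaxA' i w hw
    have h2 : -(w i) ≤ nA i := hnA' i w hw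
    have hval : (m + w) i = m i + w i := rfl
    by_cases hiQ : i ∈ Q
    · have hmi : m i = -maxA i := by simp [hm, hiQ]
      exact ⟨fun h => by rw [hval, hmi] at h; exact absurd h (by omega), fun _ => hiQ⟩
    · have hmi : m i = nA i := by simp [hm, hiQ]
      refine ⟨fun h => ?_, fun h => by rw [hval, hmi] at h; exact absurd h (by omega)⟩
      rw [hval, hmi] at h
      by_cases hiP : i ∈ P
      · exact hiP
      · exfalso
        have h5 : maxA i + maxB i ≤ 0 := by
          by_contra hc; exact hiP (HmaxP i (by omega))
        have h6 : nA i + nB i ≤ 0 := by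
          by_contra hc; exact hiQ (HminQ i (by omega))
        have h7 : v₀ i ≤ maxB i := hmaxB' i v₀ hv₀
        have h8 : -(v₀ i) ≤ nB i := hnB' i v₀ hv₀
        omega
  · -- `x^{-m} * b` is good
    rw [PfcAux.mem_goodAlg_iff]
    intro v hv
    obtain ⟨w, hw, rfl⟩ := PfcAux.support_of'_mul hv
    intro i
    have h1 : w i ≤ maxB i := hmaxB' i w hw
    have h2 : -(w i) ≤ nB i := hnB' i w hw
    have hval : (-m + w) i = -(m i) + w i := rfl
    by_cases hiQ : i ∈ Q
    · have hmi : m i = -maxA i := by simp [hm, hiQ]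
      refine ⟨fun h => ?_, fun _ => hiQ⟩
      rw [hval, hmi] at h
      by_cases hiP : i ∈ P
      · exact hiP
      · exfalso
        have h5 : maxA i + maxB i ≤ 0 := by
          by_contra hc; exact hiP (HmaxP i (by omega))
        omega
    · have hmi : m i = nA i := by simp [hm, hiQ]
      have h6 : nA i + nB i ≤ 0 := by
        by_contra hc; exact hiQ (HminQ i (by omega))
      refine ⟨fun h => ?_, fun h => by rw [hval, hmi] at h; exact absurd h (by omega)⟩
      rw [hval, hmi] at h
      by_cases hiP : i ∈ P
      · exact hiP
      · exfalso
        have h5 : maxA i + maxB i ≤ 0 := by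
          by_contra hc; exact hiP (HmaxP i (by omega))
        have h7 : w₀ i ≤ maxA i := hmaxA' i w₀ hw₀
        have h8 : -(w₀ i) ≤ nA i := hnA' i w₀ hw₀
        omega
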